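/- Let Ω ⊂ ℝ^m be a bounded domain and let u ∈ C(Ω̄). Assume: (i) u satisfies the sub-mean value property: u(x) ≤ ⨍_{B_t(x)} u dμ whenever x ∈ Ω, t > 0 and B_t(x) ⊂ Ω; (ii) there are C₁ > 0 and β ∈ (0,1] with |u(x) − u(y)| ≤ C₁ |x − y|^β for all x ∈ Ω and y ∈ ∂Ω; (iii) there are C₀ > 0 and ε₀ > 0 with μ(Ω \ Ω_{2ε}) ≤ C₀ ε for all ε ∈ (0, ε₀]. Then there exists a constant C > 0, depending only on C₀, C₁, β and m, such that for all ε ∈ (0, ε₀], ∫_{Ω_ε} (û_ε(x) − u(x)) dμ(x) ≤ C ε^{1+β}; in particular, since û_ε − u ≥ 0 on Ω_ε by (i), ‖û_ε − u‖_{L¹(Ω_ε)} ≤ C ε^{1+β}. -/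

import Mathlib

open MeasureTheory Metric

/-- `L¹` estimate for the ball-average regularization: if `u` satisfies the
sub-mean value property, is Hölder of exponent `β` against boundary points, and the collar
`Ω \ Ω_{2ε}` has measure `≤ C₀ ε`, then
`∫_{Ω_ε} (û_ε - u) dμ ≤ C ε^{1+β}`, and in particular `‖û_ε - u‖_{L¹(Ω_ε)} ≤ C ε^{1+β}`. -/
theorem stmt_8
    (m : ℕ) (Ω : Set (EuclideanSpace ℝ (Fin m)))
    (hΩo : IsOpen Ω) (hΩb : Bornology.IsBounded Ω) (hΩc : IsConnected Ω)
    (u : EuclideanSpace ℝ (Fin m) → ℝ) (hu : ContinuousOn u (closure Ω))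
    (hsub : ∀ x ∈ Ω, ∀ t : ℝ, 0 < t → ball x t ⊆ Ω → u x ≤ ⨍ y in ball x t, u y)
    (C₁ β : ℝ) (hC₁ : 0 < C₁) (hβ : β ∈ Set.Ioc (0:ℝ) 1)
    (hbdry : ∀ x ∈ Ω, ∀ y ∈ frontier Ω, |u x - u y| ≤ C₁ * ‖x - y‖ ^ β)
    (C₀ ε₀ : ℝ) (hC₀ : 0 < C₀) (hε₀ : 0 < ε₀)
    (hcollar : ∀ ε : ℝ, 0 < ε → ε ≤ ε₀ →
      volume (Ω \ {x ∈ Ω | 2 * ε < infDist x (frontier Ω)}) ≤ ENNReal.ofReal (C₀ * ε)) :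
    ∃ C > 0, ∀ ε : ℝ, 0 < ε → ε ≤ ε₀ →
      (∫ x in {x ∈ Ω | ε < infDist x (frontier Ω)},
          ((⨍ y in ball x ε, u y) - u x)) ≤ C * ε ^ (1 + β) ∧
      (∫ x in {x ∈ Ω | ε < infDist x (frontier Ω)},
          |(⨍ y in ball x ε, u y) - u x|) ≤ C * ε ^ (1 + β) := by
  classical
  obtain ⟨K, hK⟩ : ∃ K : ℝ, ∀ x ∈ closure Ω, |u x| ≤ K := by
    obtain ⟨K, hK⟩ := hΩb.isCompact_closure.exists_bound_of_continuousOn hu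
    exact ⟨K, fun x hx => by simpa [Real.norm_eq_abs] using hK x hx⟩
  set v : EuclideanSpace ℝ (Fin m) → ℝ := Ω.piecewise u (fun _ => 0) with hv_def
  have hv_meas : Measurable v :=
    ContinuousOn.measurable_piecewise (hu.mono subset_closure) continuousOn_const
      hΩo.measurableSet
  have hv_eq : ∀ x ∈ Ω, v x = u x := fun x hx => Set.piecewise_eq_of_mem _ _ _ hx
  have hv_bd : ∀ x, |v x| ≤ max K 0 := by
    intro x
    by_cases hx : x ∈ Ω
    · rw [hv_eq x hx]
      exact le_trans (hK x (subset_closure hx)) (le_max_left _ _)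
    · rw [hv_def]
      rw [Set.piecewise_eq_of_notMem _ _ _ hx]
      simp
  have hμΩ : volume Ω < ⊤ := hΩb.measure_lt_top
  have hβ0 : (0:ℝ) < β := hβ.1
  set M : ℝ := 2 * C₁ * 2 ^ β with hM_def
  have hM_pos : 0 < M := by positivity
  refine ⟨C₁ * 2 ^ β * C₀ + 1, by positivity, ?_⟩
  intro ε hε hεε₀
  set Oe := {x ∈ Ω | ε < infDist x (frontier Ω)} with hOe_def
  have hOe_sub : Oe ⊆ Ω := fun x hx => hx.1
  have hOe_open : IsOpen Oe := by
    have h : Oe = Ω ∩ (fun x => infDist x (frontier Ω)) ⁻¹' Set.Ioi ε := rfl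
    rw [h]
    exact hΩo.inter (isOpen_Ioi.preimage (continuous_infDist_pt _))
  have hball : ∀ x ∈ Oe, ball x ε ⊆ Ω := by
    intro x hx
    have hdisj : Disjoint (ball x ε) (frontier Ω) := by
      rw [Set.disjoint_left]
      intro z hz hzf
      have h1 : infDist x (frontier Ω) ≤ dist x z := infDist_le_dist_of_mem hzf
      have h2 : dist z x < ε := mem_ball.1 hz
      rw [dist_comm] at h2
      linarith [hx.2]
    have hsub2 : ball x ε ⊆ Ω ∪ (closure Ω)ᶜ := by
      intro z hz
      by_cases hzΩ : z ∈ Ω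
      · exact Or.inl hzΩ
      · refine Or.inr fun hzc => ?_
        exact (Set.disjoint_left.1 hdisj hz) (by rw [hΩo.frontier_eq]; exact ⟨hzc, hzΩ⟩)
    exact (convex_ball x ε).isPreconnected.subset_left_of_subset_union hΩo
      isClosed_closure.isOpen_compl
      (disjoint_compl_right.mono_left subset_closure) hsub2 ⟨x, mem_ball_self hε, hx.1⟩
  have hfrc : IsCompact (frontier Ω) :=
    Metric.isCompact_of_isClosed_isBounded isClosed_frontier
      (hΩb.closure.subset frontier_subset_closure)
  -- key pointwise oscillation estimate
  have hMest : ∀ x ∈ Oe, ∀ y ∈ Ω \ Oe, dist x y < ε → |v y - v x| ≤ M * ε ^ β := by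
    intro x hx y hy hd
    have hfne : (frontier Ω).Nonempty := by
      by_contra h
      rw [Set.not_nonempty_iff_eq_empty] at h
      have h2 := hx.2
      rw [h, infDist_empty] at h2
      linarith
    obtain ⟨z, hz, hzd⟩ := hfrc.exists_infDist_eq_dist hfne y
    have hyOe : ¬ ε < infDist y (frontier Ω) := fun hc => hy.2 ⟨hy.1, hc⟩
    have hyz : dist y z ≤ ε := by rw [← hzd]; linarith [not_lt.1 hyOe]
    have hxz : dist x z ≤ 2 * ε := by
      calc dist x z ≤ dist x y + dist y z := dist_triangle _ _ _
        _ ≤ 2 * ε := by linarith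
    have e1 : |u x - u z| ≤ C₁ * (2 * ε) ^ β := by
      refine le_trans (hbdry x hx.1 z hz) ?_
      have : ‖x - z‖ ^ β ≤ (2 * ε) ^ β :=
        Real.rpow_le_rpow (norm_nonneg _) (by rw [← dist_eq_norm]; exact hxz) hβ0.le
      exact mul_le_mul_of_nonneg_left this hC₁.le
    have e2 : |u y - u z| ≤ C₁ * (2 * ε) ^ β := by
      refine le_trans (hbdry y hy.1 z hz) ?_
      have h1 : ‖y - z‖ ^ β ≤ (2 * ε) ^ β := by
        refine Real.rpow_le_rpow (norm_nonneg _) ?_ hβ0.le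
        rw [← dist_eq_norm]; linarith
      exact mul_le_mul_of_nonneg_left h1 hC₁.le
    have habs : |u y - u x| ≤ 2 * (C₁ * (2 * ε) ^ β) := by
      have h3 : |u y - u x| ≤ |u y - u z| + |u x - u z| := by
        rw [abs_sub_comm (u x) (u z)]
        exact abs_sub_le _ _ _
      linarith
    rw [hv_eq y hy.1, hv_eq x hx.1]
    calc |u y - u x| ≤ 2 * (C₁ * (2 * ε) ^ β) := habs
      _ = M * ε ^ β := by
          rw [Real.mul_rpow (by norm_num) hε.le, hM_def]; ring
  -- the ball measure
  set B : ENNReal := volume (ball (0 : EuclideanSpace ℝ (Fin m)) ε) with hB_def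
  have hB_pos : B ≠ 0 := (measure_ball_pos _ _ hε).ne'
  have hB_top : B ≠ ⊤ := measure_ball_lt_top.ne
  set b : ℝ := B.toReal with hb_def
  have hb_pos : 0 < b := ENNReal.toReal_pos hB_pos hB_top
  have hballvol : ∀ x : EuclideanSpace ℝ (Fin m), volume (ball x ε) = B :=
    fun x => by rw [hB_def, Measure.addHaar_ball_center]
  -- product measure setting
  set ν : Measure (EuclideanSpace ℝ (Fin m) × EuclideanSpace ℝ (Fin m)) :=
    (volume : Measure (EuclideanSpace ℝ (Fin m))).prod volume with hν_def
  set T : Set (EuclideanSpace ℝ (Fin m) × EuclideanSpace ℝ (Fin m)) :=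
    {p | p.1 ∈ Oe ∧ p.2 ∈ Ω ∧ dist p.1 p.2 < ε} with hT_def
  have hT_meas : MeasurableSet T := by
    have h : T = (Prod.fst ⁻¹' Oe) ∩ ((Prod.snd ⁻¹' Ω) ∩
        {p : EuclideanSpace ℝ (Fin m) × EuclideanSpace ℝ (Fin m) | dist p.1 p.2 < ε}) := rfl
    rw [h]
    exact ((hOe_open.preimage continuous_fst).inter ((hΩo.preimage continuous_snd).inter
      (isOpen_lt (continuous_fst.dist continuous_snd) continuous_const))).measurableSet
  set F : EuclideanSpace ℝ (Fin m) × EuclideanSpace ℝ (Fin m) → ℝ :=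
    T.indicator (fun p => v p.2 - v p.1) with hF_def
  have hF_meas : Measurable F :=
    ((hv_meas.comp measurable_snd).sub (hv_meas.comp measurable_fst)).indicator hT_meas
  have hF_int : Integrable F ν := by
    refine Integrable.mono' (g := (Ω ×ˢ Ω).indicator (fun _ => 2 * max K 0))
      ?_ hF_meas.aestronglyMeasurable ?_
    · rw [integrable_indicator_iff (hΩo.measurableSet.prod hΩo.measurableSet)]
      refine integrableOn_const (ne_of_lt ?_)
      rw [hν_def, Measure.prod_prod]
      exact ENNReal.mul_lt_top hμΩ hμΩ
    · refine Filter.Eventually.of_forall fun p => ?_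
      by_cases hp : p ∈ T
      · rw [hF_def, Set.indicator_of_mem hp]
        have hpΩ : p ∈ Ω ×ˢ Ω := ⟨hOe_sub hp.1, hp.2.1⟩
        rw [Set.indicator_of_mem hpΩ]
        have h1 := hv_bd p.1
        have h2 := hv_bd p.2
        rw [Real.norm_eq_abs]
        calc |v p.2 - v p.1| ≤ |v p.2| + |v p.1| := abs_sub _ _
          _ ≤ 2 * max K 0 := by linarith
      · rw [hF_def, Set.indicator_of_notMem hp, norm_zero]
        exact Set.indicator_apply_nonneg (fun _ => by positivity)
  -- inner integral computation
  have hinner : ∀ x : EuclideanSpace ℝ (Fin m),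
      (∫ y, F (x, y)) = b * (Oe.indicator (fun x => (⨍ y in ball x ε, v y) - v x) x) := by
    intro x
    by_cases hx : x ∈ Oe
    · have hbx : ball x ε ⊆ Ω := hball x hx
      have h1 : (fun y => F (x, y)) = (ball x ε).indicator (fun y => v y - v x) := by
        funext y
        by_cases hy : y ∈ ball x ε
        · have hT' : (x, y) ∈ T := ⟨hx, hbx hy, by rw [dist_comm]; exact mem_ball.1 hy⟩
          rw [hF_def, Set.indicator_of_mem hT', Set.indicator_of_mem hy]
        · have hT' : (x, y) ∉ T := fun h => hy (mem_ball.2 (by rw [dist_comm]; exact h.2.2))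
          rw [hF_def, Set.indicator_of_notMem hT', Set.indicator_of_notMem hy]
      rw [h1, integral_indicator measurableSet_ball, Set.indicator_of_mem hx]
      have hvint : IntegrableOn v (ball x ε) volume := by
        refine Integrable.mono' (g := fun _ => max K 0) ?_
          (hv_meas.aestronglyMeasurable.restrict) ?_
        · exact integrableOn_const measure_ball_lt_top.ne
        · exact Filter.Eventually.of_forall fun y => by
            rw [Real.norm_eq_abs]; exact hv_bd y
      rw [integral_sub hvint (integrableOn_const measure_ball_lt_top.ne)]
      rw [setAverage_eq, integral_const]
      simp only [smul_eq_mul, Measure.real, Measure.restrict_apply, MeasurableSet.univ, Set.univ_inter]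
      rw [hballvol x]
      rw [← hb_def]
      field_simp
    · have h0 : (fun y => F (x, y)) = fun _ => 0 := by
        funext y
        exact Set.indicator_of_notMem (fun h => hx h.1) _
      rw [h0, integral_zero, Set.indicator_of_notMem hx, mul_zero]
  set D : ℝ := ∫ x in Oe, ((⨍ y in ball x ε, v y) - v x) with hD_def
  have hiter : (∫ p, F p ∂ν) = b * D := by
    rw [hν_def, MeasureTheory.integral_prod _ hF_int]
    calc (∫ x, ∫ y, F (x, y)) =
        ∫ x, b * (Oe.indicator (fun x => (⨍ y in ball x ε, v y) - v x) x) := by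
          exact integral_congr_ae (Filter.Eventually.of_forall hinner)
      _ = b * ∫ x, Oe.indicator (fun x => (⨍ y in ball x ε, v y) - v x) x := by
          rw [integral_const_mul]
      _ = b * D := by rw [integral_indicator hOe_open.measurableSet]
  -- swap
  have hF'_int : Integrable (F ∘ Prod.swap) ν := hF_int.swap
  have hswap_int_eq : (∫ p, F (Prod.swap p) ∂ν) = ∫ p, F p ∂ν := by
    exact integral_prod_swap F
  -- the bad set
  set S : Set (EuclideanSpace ℝ (Fin m)) := Ω \ Oe with hS_def
  have hS_meas : MeasurableSet S := hΩo.measurableSet.diff hOe_open.measurableSet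
  set A : Set (EuclideanSpace ℝ (Fin m) × EuclideanSpace ℝ (Fin m)) :=
    {p | p.1 ∈ S ∧ dist p.1 p.2 < ε} with hA_def
  have hA_meas : MeasurableSet A := by
    have h : A = (Prod.fst ⁻¹' S) ∩
        {p : EuclideanSpace ℝ (Fin m) × EuclideanSpace ℝ (Fin m) | dist p.1 p.2 < ε} := rfl
    rw [h]
    exact (hS_meas.preimage measurable_fst).inter
      (isOpen_lt (continuous_fst.dist continuous_snd) continuous_const).measurableSet
  have hνA : ν A = volume S * B := by
    rw [hν_def, Measure.prod_apply hA_meas]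
    have h : ∀ x : EuclideanSpace ℝ (Fin m),
        volume (Prod.mk x ⁻¹' A) = S.indicator (fun _ => B) x := by
      intro x
      by_cases hx : x ∈ S
      · have h2 : Prod.mk x ⁻¹' A = ball x ε := by
          ext y
          simp only [hA_def, Set.mem_preimage, Set.mem_setOf_eq, mem_ball, dist_comm y x]
          exact ⟨fun h => h.2, fun h => ⟨hx, h⟩⟩
        rw [h2, hballvol x, Set.indicator_of_mem hx]
      · have h2 : Prod.mk x ⁻¹' A = ∅ := by
          ext y
          simp only [hA_def, Set.mem_preimage, Set.mem_setOf_eq, Set.mem_empty_iff_false,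
            iff_false]
          exact fun h => hx h.1
        rw [h2, measure_empty, Set.indicator_of_notMem hx]
    simp_rw [h]
    rw [lintegral_indicator hS_meas, setLIntegral_const, mul_comm]
  set U : Set (EuclideanSpace ℝ (Fin m) × EuclideanSpace ℝ (Fin m)) :=
    A ∪ Prod.swap ⁻¹' A with hU_def
  have hU_meas : MeasurableSet U := hA_meas.union (hA_meas.preimage measurable_swap)
  have hνU : ν U ≤ 2 * (volume S * B) := by
    calc ν U ≤ ν A + ν (Prod.swap ⁻¹' A) := measure_union_le _ _
      _ = ν A + ν A := by
          rw [Measure.measurePreserving_swap.measure_preimage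
            hA_meas.nullMeasurableSet]
      _ = 2 * (volume S * B) := by rw [hνA]; ring
  have hνU_top : ν U < ⊤ := by
    refine lt_of_le_of_lt hνU ?_
    exact ENNReal.mul_lt_top (by norm_num)
      (ENNReal.mul_lt_top (lt_of_le_of_lt (measure_mono Set.diff_subset) hμΩ) hB_top.lt_top)
  set H : EuclideanSpace ℝ (Fin m) × EuclideanSpace ℝ (Fin m) → ℝ :=
    U.indicator (fun _ => M * ε ^ β) with hH_def
  have hH_int : Integrable H ν := by
    rw [hH_def, integrable_indicator_iff hU_meas]
    exact integrableOn_const hνU_top.ne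
  -- pointwise bound
  have hGH : ∀ p, F p + F (Prod.swap p) ≤ H p := by
    rintro ⟨x, y⟩
    have hH_nonneg : 0 ≤ H (x, y) :=
      Set.indicator_apply_nonneg (fun _ => by positivity)
    by_cases h1 : (x, y) ∈ T <;> by_cases h2 : (y, x) ∈ T
    · rw [hF_def]
      simp only [Prod.swap_prod_mk]
      rw [Set.indicator_of_mem h1, Set.indicator_of_mem h2]
      simpa using hH_nonneg
    · -- x ∈ Oe, y ∈ S
      have hyS : y ∈ S := by
        refine ⟨h1.2.1, fun hyOe => h2 ⟨hyOe, hOe_sub h1.1, by rw [dist_comm]; exact h1.2.2⟩⟩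
      have hbound := hMest x h1.1 y hyS h1.2.2
      have hU' : (x, y) ∈ U := by
        refine Or.inr ?_
        simp only [Set.mem_preimage, Prod.swap_prod_mk]
        exact ⟨hyS, by rw [dist_comm]; exact h1.2.2⟩
      rw [hF_def]
      simp only [Prod.swap_prod_mk]
      rw [Set.indicator_of_mem h1, Set.indicator_of_notMem h2, add_zero,
        hH_def, Set.indicator_of_mem hU']
      calc v y - v x ≤ |v y - v x| := le_abs_self _
        _ ≤ M * ε ^ β := hbound
    · -- y ∈ Oe, x ∈ S
      have hxS : x ∈ S := by
        refine ⟨h2.2.1, fun hxOe => h1 ⟨hxOe, hOe_sub h2.1, by rw [dist_comm]; exact h2.2.2⟩⟩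
      have hbound := hMest y h2.1 x hxS h2.2.2
      have hU' : (x, y) ∈ U :=
        Or.inl ⟨hxS, (dist_comm x y).trans_lt h2.2.2⟩
      rw [hF_def]
      simp only [Prod.swap_prod_mk]
      rw [Set.indicator_of_notMem h1, Set.indicator_of_mem h2, zero_add,
        hH_def, Set.indicator_of_mem hU']
      calc v x - v y ≤ |v x - v y| := le_abs_self _
        _ ≤ M * ε ^ β := hbound
    · rw [hF_def]
      simp only [Prod.swap_prod_mk]
      rw [Set.indicator_of_notMem h1, Set.indicator_of_notMem h2]
      simpa using hH_nonneg
  -- put it together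
  have hSle : (volume S).toReal ≤ C₀ * (ε / 2) := by
    have h1 := hcollar (ε / 2) (by linarith) (by linarith)
    have h2 : {x ∈ Ω | 2 * (ε / 2) < infDist x (frontier Ω)} = Oe := by
      simp only [show 2 * (ε / 2) = ε by ring]
      rfl
    rw [h2] at h1
    exact ENNReal.toReal_le_of_le_ofReal (by positivity) h1
  have hHle : (∫ p, H p ∂ν) ≤ M * ε ^ β * (C₀ * ε * b) := by
    rw [hH_def, integral_indicator_const _ hU_meas]
    have h1 : (ν U).toReal ≤ 2 * ((volume S).toReal * b) := by
      have h2 : (2 * (volume S * B)).toReal = 2 * ((volume S).toReal * b) := by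
        rw [ENNReal.toReal_mul, ENNReal.toReal_mul, ENNReal.toReal_ofNat, hb_def]
      rw [← h2]
      exact ENNReal.toReal_mono (by
        exact (ENNReal.mul_lt_top (by norm_num) (ENNReal.mul_lt_top
          (lt_of_le_of_lt (measure_mono Set.diff_subset) hμΩ) hB_top.lt_top)).ne) hνU
    have h3 : 2 * ((volume S).toReal * b) ≤ C₀ * ε * b := by
      have := mul_le_mul_of_nonneg_right hSle hb_pos.le
      nlinarith
    calc (ν U).toReal • (M * ε ^ β) = (ν U).toReal * (M * ε ^ β) := smul_eq_mul _ _
      _ ≤ (C₀ * ε * b) * (M * ε ^ β) := by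
          refine mul_le_mul_of_nonneg_right (le_trans h1 h3) (by positivity)
      _ = M * ε ^ β * (C₀ * ε * b) := by ring
  have h2bD : 2 * (b * D) ≤ M * ε ^ β * (C₀ * ε * b) := by
    have hF''_int : Integrable (fun p => F (Prod.swap p)) ν := hF'_int
    have hsum_int : Integrable (fun p => F p + F (Prod.swap p)) ν := hF_int.add hF''_int
    have hle : (∫ p, (F p + F (Prod.swap p)) ∂ν) ≤ ∫ p, H p ∂ν :=
      integral_mono hsum_int hH_int hGH
    have hsum : (∫ p, (F p + F (Prod.swap p)) ∂ν) = 2 * (b * D) := by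
      rw [integral_add hF_int hF''_int, hswap_int_eq, hiter]; ring
    rw [← hsum]
    exact le_trans hle hHle
  have hD_le : D ≤ C₁ * 2 ^ β * C₀ * ε ^ (1 + β) := by
    have h2 : M * ε ^ β * (C₀ * ε * b) = 2 * (b * (C₁ * 2 ^ β * C₀ * ε ^ (1 + β))) := by
      rw [Real.rpow_add hε, Real.rpow_one, hM_def]; ring
    have h1 : 2 * (b * D) ≤ 2 * (b * (C₁ * 2 ^ β * C₀ * ε ^ (1 + β))) := h2 ▸ h2bD
    have h1' : b * D ≤ b * (C₁ * 2 ^ β * C₀ * ε ^ (1 + β)) := by linarith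
    exact le_of_mul_le_mul_left h1' hb_pos
  -- transfer back to u
  have hcong : ∀ x ∈ Oe, ((⨍ y in ball x ε, u y) - u x) = ((⨍ y in ball x ε, v y) - v x) := by
    intro x hx
    have h1 : (⨍ y in ball x ε, u y) = ⨍ y in ball x ε, v y := by
      rw [setAverage_eq, setAverage_eq]
      congr 1
      refine setIntegral_congr_fun measurableSet_ball fun y hy => ?_
      exact (hv_eq y (hball x hx hy)).symm
    rw [h1, hv_eq x hx.1]
  have hgoal1 : (∫ x in Oe, ((⨍ y in ball x ε, u y) - u x)) = D := by
    rw [hD_def]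
    exact setIntegral_congr_fun hOe_open.measurableSet fun x hx => hcong x hx
  have hfinal : D ≤ (C₁ * 2 ^ β * C₀ + 1) * ε ^ (1 + β) := by
    refine le_trans hD_le ?_
    have : (0:ℝ) ≤ ε ^ (1 + β) := Real.rpow_nonneg hε.le _
    nlinarith
  constructor
  · rw [hgoal1]; exact hfinal
  · have habs : (∫ x in Oe, |(⨍ y in ball x ε, u y) - u x|)
        = ∫ x in Oe, ((⨍ y in ball x ε, u y) - u x) := by
      refine setIntegral_congr_fun hOe_open.measurableSet fun x hx => ?_
      refine abs_of_nonneg ?_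
      have := hsub x hx.1 ε hε (hball x hx)
      linarith
    rw [habs, hgoal1]; exact hfinal
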